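/- arXiv:1707.00771 — 2 statements merged into one kernel-verified Lean document; each statement's English description precedes it below -/
import Mathlib

section
/- If x ∈ ℝ^d is not badly approximable (i.e., inf_{n∈ℕ} n·‖nx‖^d = 0), then there exists y ∈ ℝ^d such that for every non-increasing ψ : ℕ → ℝ_{≥0} with Σ_n ψ(n)^d = ∞, there are infinitely many n ∈ ℕ with ‖nx+y‖ < ψ(n). That is, Φ(x) ≠ ∅. -/
open scoped ENNReal
open Filter

/-- Sup-norm distance from `x ∈ ℝ^d` to the nearest point of `ℤ^d`. -/
noncomputable def nrm {d : ℕ} (x : Fin d → ℝ) : ℝ :=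
  ⨆ i, |x i - round (x i)|

/-- The class `𝒟` of non-increasing `ψ : ℕ → ℝ≥0` with `Σ ψ(n)^d = ∞`. -/
def calD (d : ℕ) : Set (ℕ → ℝ) :=
  {ψ | (∀ n, 0 ≤ ψ n) ∧ Antitone ψ ∧ ¬ Summable (fun n => ψ n ^ d)}

/-- The inhomogeneously `ψ`-approximable pairs. -/
def W {d : ℕ} (ψ : ℕ → ℝ) : Set ((Fin d → ℝ) × (Fin d → ℝ)) :=
  {p | ∃ᶠ n : ℕ in atTop, nrm (fun i => (n : ℝ) * p.1 i + p.2 i) < ψ n}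

/-- `Π = ⋂_{ψ ∈ 𝒟} W(ψ)`. -/
def PiSet (d : ℕ) : Set ((Fin d → ℝ) × (Fin d → ℝ)) := ⋂ ψ ∈ calD d, W ψ

/-- The vertical fiber `Φ(x)`. -/
def Phi {d : ℕ} (x : Fin d → ℝ) : Set (Fin d → ℝ) := {y | (x, y) ∈ PiSet d}



lemma nrm_nonneg {d : ℕ} (v : Fin d → ℝ) : 0 ≤ nrm v :=
  Real.iSup_nonneg fun _ => abs_nonneg _

lemma le_nrm {d : ℕ} (v : Fin d → ℝ) (i : Fin d) : |v i - round (v i)| ≤ nrm v :=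
  le_ciSup (Set.Finite.bddAbove (Set.finite_range (fun j => |v j - round (v j)|))) i

lemma nrm_int {d : ℕ} [Nonempty (Fin d)] {v : Fin d → ℝ} (h : ∀ i, ∃ z : ℤ, v i = z) :
    nrm v = 0 := by
  have h2 : ∀ i, |v i - round (v i)| = 0 := by
    intro i
    obtain ⟨z, hz⟩ := h i
    rw [hz, round_intCast, sub_self, abs_zero]
  rw [nrm]; simp only [h2]; exact ciSup_const

lemma key_lemma {d : ℕ} (hd : 0 < d) (x : Fin d → ℝ)
    (hwell : sInf {r : ℝ | ∃ n : ℕ, 0 < n ∧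
      r = (n : ℝ) * (nrm (fun i => (n : ℝ) * x i)) ^ d} = 0) :
    ∀ (M : ℕ) (ε : ℝ), 0 < ε →
      ∃ m : ℕ, M < m ∧ (m : ℝ) * (nrm (fun i => (m : ℝ) * x i)) ^ d < ε := by
  intro M ε hε
  haveI : Nonempty (Fin d) := ⟨⟨0, hd⟩⟩
  set q : ℕ → ℝ := fun n => (n : ℝ) * (nrm (fun i => (n : ℝ) * x i)) ^ d with hq
  set S : Set ℝ := {r : ℝ | ∃ n : ℕ, 0 < n ∧ r = q n} with hS
  have hne : S.Nonempty := ⟨q 1, 1, one_pos, rfl⟩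
  have hbdd : BddBelow S := by
    refine ⟨0, fun r hr => ?_⟩
    obtain ⟨n, hn, rfl⟩ := hr
    exact mul_nonneg (Nat.cast_nonneg n) (pow_nonneg (nrm_nonneg _) d)
  have hlt : ∀ c : ℝ, 0 < c → ∃ m : ℕ, 0 < m ∧ q m < c := by
    intro c hc
    have : sInf S < c := by rw [hwell]; exact hc
    obtain ⟨b, hb, hbc⟩ := (csInf_lt_iff hbdd hne).mp this
    obtain ⟨m, hm, rfl⟩ := hb
    exact ⟨m, hm, hbc⟩
  by_cases hz : ∃ n ∈ Finset.Icc 1 M, nrm (fun i => (n : ℝ) * x i) = 0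
  · obtain ⟨n, hn, h0⟩ := hz
    obtain ⟨hn1, hnM⟩ := Finset.mem_Icc.mp hn
    have hint : ∀ i, ∃ z : ℤ, (n : ℝ) * x i = z := by
      intro i
      have h1 : |(n : ℝ) * x i - round ((n : ℝ) * x i)| ≤ 0 := by
        have := le_nrm (fun j => (n : ℝ) * x j) i
        rw [h0] at this
        exact this
      have h2 : (n : ℝ) * x i - round ((n : ℝ) * x i) = 0 :=
        abs_eq_zero.mp (le_antisymm h1 (abs_nonneg _))
      exact ⟨round ((n : ℝ) * x i), by linarith⟩
    refine ⟨n * (M + 1), ?_, ?_⟩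
    · calc M < M + 1 := Nat.lt_succ_self M
        _ ≤ n * (M + 1) := Nat.le_mul_of_pos_left _ hn1
    · have : nrm (fun i => ((n * (M + 1) : ℕ) : ℝ) * x i) = 0 := by
        apply nrm_int
        intro i
        obtain ⟨z, hz⟩ := hint i
        refine ⟨(M + 1 : ℕ) * z, ?_⟩
        push_cast
        rw [show ((n : ℝ) * ((M : ℝ) + 1)) * x i = ((M : ℝ) + 1) * ((n : ℝ) * x i) by ring, hz]
      rw [this, zero_pow hd.ne', mul_zero]
      exact hε
  · push_neg at hz
    have hqpos : ∀ n ∈ Finset.Icc 1 M, 0 < q n := by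
      intro n hn
      obtain ⟨hn1, _⟩ := Finset.mem_Icc.mp hn
      have h1 : 0 < nrm (fun i => (n : ℝ) * x i) :=
        lt_of_le_of_ne (nrm_nonneg _) (Ne.symm (hz n hn))
      exact mul_pos (by exact_mod_cast hn1) (pow_pos h1 d)
    set c : ℝ := min ε (if h : (Finset.Icc 1 M).Nonempty then (Finset.Icc 1 M).inf' h q else ε)
      with hc
    have hcpos : 0 < c := by
      rw [hc]
      apply lt_min hε
      split_ifs with h
      · obtain ⟨n₀, hn₀, hn₀e⟩ := Finset.exists_mem_eq_inf' h q
        rw [hn₀e]; exact hqpos n₀ hn₀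
      · exact hε
    obtain ⟨m, hm0, hmq⟩ := hlt c hcpos
    refine ⟨m, ?_, lt_of_lt_of_le hmq (min_le_left _ _)⟩
    by_contra hMm
    push_neg at hMm
    have hmem : m ∈ Finset.Icc 1 M := Finset.mem_Icc.mpr ⟨hm0, hMm⟩
    have : c ≤ q m := by
      rw [hc]
      refine le_trans (min_le_right _ _) ?_
      rw [dif_pos ⟨m, hmem⟩]
      exact Finset.inf'_le q hmem
    linarith

lemma nrm_le {d : ℕ} [Nonempty (Fin d)] {v : Fin d → ℝ} {z : Fin d → ℤ} {r : ℝ}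
    (h : ∀ i, |v i - (z i : ℝ)| ≤ r) : nrm v ≤ r :=
  ciSup_le fun i => (round_le (v i) (z i)).trans (h i)

section Main

variable {d : ℕ} (x : Fin d → ℝ)

-- the rate sequence
noncomputable def eps (d k : ℕ) : ℝ := (1/8 : ℝ) ^ d * (1/2) ^ k

lemma eps_pos (d k : ℕ) : 0 < eps d k := by
  apply mul_pos <;> positivity

lemma eps_le (d k : ℕ) : 2 ^ d * eps d k ≤ (1/2 : ℝ) ^ k := by
  rw [eps, ← mul_assoc, ← mul_pow]
  have h1 : ((2 : ℝ) * (1/8)) ^ d ≤ 1 := by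
    apply pow_le_one₀ <;> norm_num
  nlinarith [pow_nonneg (by norm_num : (0:ℝ) ≤ 1/2) k, pow_nonneg (by norm_num : (0:ℝ) ≤ 2*(1/8)) d]

set_option maxHeartbeats 2000000 in
theorem main_construction (hd : 0 < d)
    (key : ∀ (M : ℕ) (ε : ℝ), 0 < ε →
      ∃ m : ℕ, M < m ∧ (m : ℝ) * (nrm (fun i => (m : ℝ) * x i)) ^ d < ε) :
    ∃ y : Fin d → ℝ, ∃ n : ℕ → ℕ, ∃ r : ℕ → ℝ,
      (∀ k, k < n k) ∧ Monotone n ∧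
      (∀ k, nrm (fun i => (n k : ℝ) * x i + y i) ≤ r k) ∧
      (∀ k, 0 < r k) ∧
      (∀ K k, K ≤ k → ∀ ψ : ℕ → ℝ, (∀ j, 0 ≤ ψ j) → Antitone ψ →
        (∀ l, K ≤ l → l ≤ k → ψ (n l) ≤ r l) →
        ∑ j ∈ Finset.range (n k), ψ j ^ d ≤ (∑ j ∈ Finset.range (n K), ψ j ^ d) + 2) := by
  haveI : Nonempty (Fin d) := ⟨⟨0, hd⟩⟩
  have hdR : (d : ℝ) ≠ 0 := Nat.cast_ne_zero.mpr hd.ne'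
  -- the sequence m
  obtain ⟨m, hm0, hmrec, hmq⟩ :
      ∃ m : ℕ → ℕ, 0 < m 0 ∧ (∀ k, 2 ^ d * m k < m (k+1)) ∧
        (∀ k, (m k : ℝ) * (nrm (fun i => (m k : ℝ) * x i)) ^ d < eps d k) := by
    refine ⟨fun k => Nat.rec (Classical.choose (key 0 (eps d 0) (eps_pos d 0)))
      (fun k mk => Classical.choose (key (2 ^ d * mk) (eps d (k+1)) (eps_pos d (k+1)))) k,
      ?_, ?_, ?_⟩
    · exact (Classical.choose_spec (key 0 (eps d 0) (eps_pos d 0))).1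
    · intro k
      exact (Classical.choose_spec (key (2 ^ d * _) (eps d (k+1)) (eps_pos d (k+1)))).1
    · intro k
      cases k with
      | zero => exact (Classical.choose_spec (key 0 (eps d 0) (eps_pos d 0))).2
      | succ k =>
          exact (Classical.choose_spec (key (2 ^ d * _) (eps d (k+1)) (eps_pos d (k+1)))).2
  have hm1 : ∀ k, 1 ≤ m k := by
    intro k
    induction k with
    | zero => exact hm0
    | succ k ih =>
        have h2 : (1:ℕ) ≤ 2 ^ d * m k := le_mul_of_one_le_of_le (Nat.one_le_two_pow) ih
        exact le_of_lt (lt_of_le_of_lt h2 (hmrec k))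
  have hmpos : ∀ k, (0:ℝ) < m k := fun k => by exact_mod_cast hm1 k
  -- delta, t, r
  set δ : ℕ → ℝ := fun k => nrm (fun i => (m k : ℝ) * x i) with hδdef
  set t : ℕ → ℝ := fun k => eps d k / m k with htdef
  set r : ℕ → ℝ := fun k => 2 * (t k) ^ ((d : ℝ)⁻¹) with hrdef
  have htpos : ∀ k, 0 < t k := fun k => div_pos (eps_pos d k) (hmpos k)
  have hrpos : ∀ k, 0 < r k := fun k =>
    mul_pos two_pos (Real.rpow_pos_of_pos (htpos k) _)
  have hδnn : ∀ k, 0 ≤ δ k := fun k => nrm_nonneg _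
  have hδd : ∀ k, δ k ^ d < t k := by
    intro k
    rw [htdef]
    rw [lt_div_iff₀ (hmpos k)]
    calc δ k ^ d * m k = (m k : ℝ) * δ k ^ d := by ring
      _ < eps d k := hmq k
  have hδr : ∀ k, δ k < r k / 2 := by
    intro k
    have h1 : δ k = ((δ k) ^ d) ^ ((d:ℝ)⁻¹) := by
      rw [← Real.rpow_natCast (δ k) d, ← Real.rpow_mul (hδnn k), mul_inv_cancel₀ hdR,
        Real.rpow_one]
    have h2 : ((δ k) ^ d) ^ ((d:ℝ)⁻¹) < (t k) ^ ((d:ℝ)⁻¹) :=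
      Real.rpow_lt_rpow (pow_nonneg (hδnn k) d) (hδd k) (by positivity)
    have h3 : δ k < (t k) ^ ((d:ℝ)⁻¹) := by rw [h1]; exact h2
    rw [hrdef]
    simp only
    linarith
  have hrd : ∀ k, r k ^ d = 2 ^ d * t k := by
    intro k
    rw [hrdef]
    simp only
    rw [mul_pow, ← Real.rpow_natCast ((t k) ^ ((d:ℝ)⁻¹)) d, ← Real.rpow_mul (htpos k).le,
      inv_mul_cancel₀ hdR, Real.rpow_one]
  have hmr : ∀ k, (m k : ℝ) * r k ^ d ≤ (1/2 : ℝ) ^ k := by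
    intro k
    have hne : (m k : ℝ) ≠ 0 := (hmpos k).ne'
    have h1 : (m k : ℝ) * r k ^ d = 2 ^ d * eps d k := by
      rw [hrd k, htdef]
      field_simp
    rw [h1]
    exact eps_le d k
  have hrhalf : ∀ k, r (k+1) ≤ r k / 2 := by
    intro k
    have hmk : (2:ℝ) ^ d * m k ≤ m (k+1) := by exact_mod_cast (hmrec k).le
    have ht2 : t (k+1) ≤ t k / 2 ^ d := by
      rw [htdef]
      simp only
      rw [div_le_div_iff₀ (hmpos (k+1)) (by positivity)]
      have he : eps d (k+1) ≤ eps d k := by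
        rw [eps, eps, pow_succ]
        nlinarith [eps_pos d k, pow_nonneg (by norm_num : (0:ℝ) ≤ 1/8) d,
          pow_nonneg (by norm_num : (0:ℝ) ≤ 1/2) k]
      have hne : (m k : ℝ) ≠ 0 := (hmpos k).ne'
      have h3 : eps d k / (m k : ℝ) * ((2:ℝ) ^ d * m k) = eps d k * 2 ^ d := by
        field_simp
      calc eps d (k+1) * 2 ^ d ≤ eps d k * 2 ^ d := by
            have : (0:ℝ) < 2 ^ d := by positivity
            nlinarith
        _ = eps d k / (m k : ℝ) * ((2:ℝ) ^ d * m k) := h3.symm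
        _ ≤ eps d k / (m k : ℝ) * m (k+1) := by
            exact mul_le_mul_of_nonneg_left hmk (div_nonneg (eps_pos d k).le (hmpos k).le)
    have h2d : ((2:ℝ) ^ d) ^ ((d:ℝ)⁻¹) = 2 := by
      rw [← Real.rpow_natCast (2:ℝ) d, ← Real.rpow_mul (by norm_num : (0:ℝ) ≤ 2),
        mul_inv_cancel₀ hdR, Real.rpow_one]
    have : (t (k+1)) ^ ((d:ℝ)⁻¹) ≤ (t k / 2 ^ d) ^ ((d:ℝ)⁻¹) :=
      Real.rpow_le_rpow (htpos (k+1)).le ht2 (by positivity)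
    rw [Real.div_rpow (htpos k).le (by positivity), h2d] at this
    rw [hrdef]
    simp only
    rw [mul_div_assoc]
    linarith
  have hrgeo : ∀ k j, r (k + j) ≤ r k * (1/2) ^ j := by
    intro k j
    induction j with
    | zero => simp
    | succ j ih =>
        have := hrhalf (k + j)
        calc r (k + (j+1)) = r ((k + j) + 1) := by ring_nf
          _ ≤ r (k + j) / 2 := hrhalf (k+j)
          _ ≤ (r k * (1/2) ^ j) / 2 := by linarith
          _ = r k * (1/2) ^ (j+1) := by ring
  -- the sequence n
  set n : ℕ → ℕ := fun k => 1 + ∑ j ∈ Finset.range k, m j with hndef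
  have hnsucc : ∀ k, n (k+1) = n k + m k := by
    intro k
    rw [hndef]
    simp [Finset.sum_range_succ, Nat.add_assoc]
  have hnlt : ∀ k, k < n k := by
    intro k
    rw [hndef]
    simp only
    have : k ≤ ∑ j ∈ Finset.range k, m j := by
      calc k = ∑ j ∈ Finset.range k, 1 := by simp
        _ ≤ ∑ j ∈ Finset.range k, m j := Finset.sum_le_sum (fun j _ => hm1 j)
    omega
  have hnmono : Monotone n := by
    apply monotone_nat_of_le_succ
    intro k
    rw [hnsucc k]
    omega
  -- the centers c
  set c : ℕ → Fin d → ℝ := fun k => Nat.rec (fun i => (round (x i) : ℝ) - x i)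
    (fun k ck => fun i => ck i - ((m k : ℝ) * x i - round ((m k : ℝ) * x i))) k with hcdef
  have hcz : ∀ k, ∀ i, ∃ z : ℤ, c k i + (n k : ℝ) * x i = z := by
    intro k
    induction k with
    | zero =>
        intro i
        refine ⟨round (x i), ?_⟩
        have h0 : n 0 = 1 := by rw [hndef]; simp
        have hc0 : c 0 i = (round (x i) : ℝ) - x i := rfl
        rw [h0, hc0]
        push_cast
        ring
    | succ k ih =>
        intro i
        obtain ⟨z, hz⟩ := ih i
        refine ⟨z + round ((m k : ℝ) * x i), ?_⟩
        have hnk : ((n (k+1) : ℕ) : ℝ) = (n k : ℝ) + (m k : ℝ) := by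
          rw [hnsucc k]; push_cast; ring
        have hcs : c (k+1) i = c k i - ((m k : ℝ) * x i - round ((m k : ℝ) * x i)) := rfl
        rw [hcs, hnk]
        push_cast
        linarith [hz]
  have hcd : ∀ k i, |c (k+1) i - c k i| ≤ δ k := by
    intro k i
    have hcs : c (k+1) i = c k i - ((m k : ℝ) * x i - round ((m k : ℝ) * x i)) := rfl
    rw [hcs]
    rw [show c k i - ((m k : ℝ) * x i - round ((m k : ℝ) * x i)) - c k i
        = -((m k : ℝ) * x i - round ((m k : ℝ) * x i)) by ring, abs_neg]
    exact le_nrm (fun j => (m k : ℝ) * x j) i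
  have hdiffbound : ∀ k i, |c (k+1) i - c k i| ≤ (r 0 / 2) * (1/2) ^ k := by
    intro k i
    calc |c (k+1) i - c k i| ≤ δ k := hcd k i
      _ ≤ r k / 2 := (hδr k).le
      _ ≤ (r 0 * (1/2) ^ k) / 2 := by
          have := hrgeo 0 k
          simp only [Nat.zero_add] at this
          linarith
      _ = (r 0 / 2) * (1/2) ^ k := by ring
  have hgeosummable : Summable (fun k : ℕ => (r 0 / 2) * (1/2 : ℝ) ^ k) :=
    (summable_geometric_of_lt_one (by norm_num) (by norm_num)).mul_left _
  have hsumabs : ∀ i, Summable (fun k => |c (k+1) i - c k i|) := by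
    intro i
    exact Summable.of_nonneg_of_le (fun k => abs_nonneg _) (fun k => hdiffbound k i) hgeosummable
  have hsum : ∀ i, Summable (fun k => c (k+1) i - c k i) := fun i => (hsumabs i).of_abs
  set y : Fin d → ℝ := fun i => c 0 i + ∑' k, (c (k+1) i - c k i) with hydef
  have hyc : ∀ k i, |y i - c k i| ≤ r k := by
    intro k i
    have htel : c k i = c 0 i + ∑ j ∈ Finset.range k, (c (j+1) i - c j i) := by
      rw [Finset.sum_range_sub (fun j => c j i)]
      ring
    have hsplit : (∑ j ∈ Finset.range k, (c (j+1) i - c j i))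
        + ∑' j, (c ((j+k)+1) i - c (j+k) i) = ∑' j, (c (j+1) i - c j i) :=
      Summable.sum_add_tsum_nat_add k (hsum i)
    have hyck : y i - c k i = ∑' j, (c ((j+k)+1) i - c (j+k) i) := by
      rw [hydef]
      simp only
      rw [htel]
      rw [← hsplit]
      ring
    rw [hyck]
    have hsummk : Summable (fun j => c ((j+k)+1) i - c (j+k) i) :=
      (summable_nat_add_iff k).mpr (hsum i)
    have hsummkabs : Summable (fun j => |c ((j+k)+1) i - c (j+k) i|) := hsummk.abs
    calc |∑' j, (c ((j+k)+1) i - c (j+k) i)| ≤ ∑' j, |c ((j+k)+1) i - c (j+k) i| := by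
          have hnorm : Summable fun j => ‖c ((j+k)+1) i - c (j+k) i‖ := by
            simpa only [Real.norm_eq_abs] using hsummkabs
          simpa only [Real.norm_eq_abs] using norm_tsum_le_tsum_norm hnorm
      _ ≤ ∑' j : ℕ, (r k / 2) * (1/2 : ℝ) ^ j := by
          apply Summable.tsum_le_tsum _ hsummkabs
            ((summable_geometric_of_lt_one (by norm_num) (by norm_num)).mul_left _)
          intro j
          calc |c ((j+k)+1) i - c (j+k) i| ≤ δ (j+k) := hcd (j+k) i
            _ ≤ r (j+k) / 2 := (hδr (j+k)).le
            _ ≤ (r k * (1/2)^j) / 2 := by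
                have h5 := hrgeo k j
                rw [add_comm k j] at h5
                linarith
            _ = (r k / 2) * (1/2)^j := by ring
      _ = (r k / 2) * (1 - 1/2)⁻¹ := by
          rw [tsum_mul_left, tsum_geometric_of_lt_one (by norm_num) (by norm_num)]
      _ = r k := by norm_num
  have hnear : ∀ k, nrm (fun i => (n k : ℝ) * x i + y i) ≤ r k := by
    intro k
    choose z hz using hcz k
    apply nrm_le (z := z)
    intro i
    have : (n k : ℝ) * x i + y i - (z i : ℝ) = y i - c k i := by
      rw [← hz i]; ring
    rw [this]
    exact hyc k i
  refine ⟨y, n, r, hnlt, hnmono, hnear, hrpos, ?_⟩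
  -- the partial-sum bound
  intro K k hKk ψ hψ0 hψa hψle
  have hblock : ∀ l, K ≤ l → l ≤ k →
      ∑ j ∈ Finset.range (n l), ψ j ^ d
        ≤ (∑ j ∈ Finset.range (n K), ψ j ^ d) + ∑ j ∈ Finset.Ico K l, (m j : ℝ) * r j ^ d := by
    intro l hKl
    induction l with
    | zero =>
        intro _
        have : K = 0 := Nat.le_zero.mp hKl
        subst this
        simp
    | succ l ih =>
        intro hlk
        rcases Nat.lt_or_ge K (l+1) with hKl' | hKl'
        · have hKl2 : K ≤ l := Nat.lt_succ_iff.mp hKl'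
          have ih2 := ih hKl2 (le_trans (Nat.le_succ l) hlk)
          have hsplit : ∑ j ∈ Finset.range (n (l+1)), ψ j ^ d
              = ∑ j ∈ Finset.range (n l), ψ j ^ d
                + ∑ j ∈ Finset.Ico (n l) (n (l+1)), ψ j ^ d := by
            simp only [Finset.range_eq_Ico]
            exact (Finset.sum_Ico_consecutive _ (Nat.zero_le _) (hnmono (Nat.le_succ l))).symm
          have hblockle : ∑ j ∈ Finset.Ico (n l) (n (l+1)), ψ j ^ d ≤ (m l : ℝ) * r l ^ d := by
            have hcard : (Finset.Ico (n l) (n (l+1))).card = m l := by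
              rw [Nat.card_Ico, hnsucc l]
              omega
            calc ∑ j ∈ Finset.Ico (n l) (n (l+1)), ψ j ^ d
                ≤ ∑ j ∈ Finset.Ico (n l) (n (l+1)), r l ^ d := by
                  apply Finset.sum_le_sum
                  intro j hj
                  have hjl : n l ≤ j := (Finset.mem_Ico.mp hj).1
                  have h1 : ψ j ≤ ψ (n l) := hψa hjl
                  have h2 : ψ (n l) ≤ r l := hψle l hKl2 (le_trans (Nat.le_succ l) hlk)
                  exact pow_le_pow_left₀ (hψ0 j) (le_trans h1 h2) d
              _ = (m l : ℝ) * r l ^ d := by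
                  rw [Finset.sum_const, hcard, nsmul_eq_mul]
          have hicos : ∑ j ∈ Finset.Ico K (l+1), (m j : ℝ) * r j ^ d
              = ∑ j ∈ Finset.Ico K l, (m j : ℝ) * r j ^ d + (m l : ℝ) * r l ^ d := by
            rw [Finset.sum_Ico_succ_top hKl2]
          rw [hsplit, hicos]
          linarith
        · have : K = l + 1 := le_antisymm hKl (Nat.le_of_lt_succ (Nat.lt_succ_of_le hKl'))
          subst this
          simp
  have hgeo : ∑ j ∈ Finset.Ico K k, (m j : ℝ) * r j ^ d ≤ 2 := by
    calc ∑ j ∈ Finset.Ico K k, (m j : ℝ) * r j ^ d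
        ≤ ∑ j ∈ Finset.Ico K k, (1/2 : ℝ) ^ j := Finset.sum_le_sum (fun j _ => hmr j)
      _ ≤ ∑ j ∈ Finset.range k, (1/2 : ℝ) ^ j := by
          apply Finset.sum_le_sum_of_subset_of_nonneg
          · rw [Finset.range_eq_Ico]
            exact Finset.Ico_subset_Ico (Nat.zero_le K) le_rfl
          · intro j _ _
            positivity
      _ ≤ 2 := sum_geometric_two_le k
  have := hblock k hKk le_rfl
  linarith
end Main


theorem stmt5 {d : ℕ} (x : Fin d → ℝ)
    (hwell : sInf {r : ℝ | ∃ n : ℕ, 0 < n ∧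
      r = (n : ℝ) * (nrm (fun i => (n : ℝ) * x i)) ^ d} = 0) :
    Phi x ≠ ∅ := by
  rcases Nat.eq_zero_or_pos d with hd0 | hd
  · exfalso
    subst hd0
    have h1 : (1:ℝ) ≤ sInf {r : ℝ | ∃ n : ℕ, 0 < n ∧
        r = (n : ℝ) * (nrm (fun i => (n : ℝ) * x i)) ^ 0} := by
      refine le_csInf ⟨((1:ℕ):ℝ) * (nrm (fun i => ((1:ℕ):ℝ) * x i)) ^ 0, 1, one_pos, rfl⟩ ?_
      rintro r ⟨n, hn, rfl⟩
      rw [pow_zero, mul_one]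
      exact_mod_cast hn
    rw [hwell] at h1
    linarith
  · have key := key_lemma hd x hwell
    obtain ⟨y, n, r, hnlt, hnmono, hnear, hrpos, hbound⟩ := main_construction x hd key
    have hy : y ∈ Phi x := by
      simp only [Phi, PiSet, Set.mem_setOf_eq, Set.mem_iInter]
      intro ψ hψ
      obtain ⟨hψ0, hψa, hψns⟩ := hψ
      simp only [W, Set.mem_setOf_eq]
      rw [Filter.frequently_atTop]
      intro N
      by_contra hcon
      push_neg at hcon
      have hψle : ∀ k, N ≤ k → ψ (n k) ≤ r k := by
        intro k hk
        have hNnk : N ≤ n k := le_trans hk (hnlt k).le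
        exact le_trans (hcon (n k) hNnk) (hnear k)
      have hsummable : Summable (fun j => ψ j ^ d) := by
        apply summable_of_sum_range_le (c := (∑ j ∈ Finset.range (n N), ψ j ^ d) + 2)
          (fun j => pow_nonneg (hψ0 j) d)
        intro M
        have hk : M ≤ n (max N M) := le_trans (le_max_right N M) (hnlt (max N M)).le
        calc ∑ j ∈ Finset.range M, ψ j ^ d
            ≤ ∑ j ∈ Finset.range (n (max N M)), ψ j ^ d :=
              Finset.sum_le_sum_of_subset_of_nonneg (Finset.range_subset_range.mpr hk)
                (fun j _ _ => pow_nonneg (hψ0 j) d)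
          _ ≤ (∑ j ∈ Finset.range (n N), ψ j ^ d) + 2 :=
              hbound N (max N M) (le_max_left N M) ψ hψ0 hψa (fun l hNl _ => hψle l hNl)
      exact hψns hsummable
    exact Set.Nonempty.ne_empty ⟨y, hy⟩
end

section
/- Let d = 1 and (x,y) ∈ Π. Then either both x and y are rational, or both are irrational. -/
open scoped ENNReal
open Filter

/-- Distance from `t ∈ ℝ` to the nearest integer. -/
noncomputable def nrm1 (t : ℝ) : ℝ := |t - round t|

/-- `S_ℓ(x,y) = Σ_{n≥ℓ} min_{ℓ≤m≤n} ‖mx+y‖`, valued in `[0,∞]` (case `d = 1`). -/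
noncomputable def S1 (l : ℤ) (x y : ℝ) : ℝ≥0∞ :=
  ∑' n : ℕ, ⨅ m ∈ Finset.Icc l (l + n), ENNReal.ofReal (nrm1 ((m : ℝ) * x + y))

/-- The class `𝒟` of non-increasing `ψ : ℕ → ℝ≥0` with `Σ ψ(n) = ∞` (case `d = 1`). -/
def calD1 : Set (ℕ → ℝ) := {ψ | (∀ n, 0 ≤ ψ n) ∧ Antitone ψ ∧ ¬ Summable ψ}

/-- `Π` for `d = 1`. -/
def Pi1 : Set (ℝ × ℝ) :=
  {p | ∀ ψ ∈ calD1, ∃ᶠ n : ℕ in atTop, nrm1 ((n : ℝ) * p.1 + p.2) < ψ n}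

/-- The vertical fiber `Φ(x)`. -/
def Phi1 (x : ℝ) : Set ℝ := {y | (x, y) ∈ Pi1}

/-- The horizontal fiber `Π^y`. -/
def PiY1 (y : ℝ) : Set ℝ := {x | (x, y) ∈ Pi1}

/- ### Auxiliary lemmas about `nrm1` -/

lemma nrm1_nonneg (t : ℝ) : 0 ≤ nrm1 t := abs_nonneg _

lemma nrm1_le_int (t : ℝ) (z : ℤ) : nrm1 t ≤ |t - z| := round_le t z

lemma nrm1_add_int (t : ℝ) (z : ℤ) : nrm1 (t + z) = nrm1 t := by
  unfold nrm1
  rw [round_add_intCast]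
  congr 1
  push_cast
  ring

lemma nrm1_pos_of_irrational {t : ℝ} (ht : Irrational t) : 0 < nrm1 t := by
  rcases (abs_nonneg (t - round t)).lt_or_eq with hlt | heq
  · exact hlt
  · exfalso
    have h0 : t - round t = 0 := abs_eq_zero.mp heq.symm
    exact ht.ne_int (round t) (by linarith)

lemma nrm1_nat_mul_le (q : ℕ) (t : ℝ) : nrm1 ((q : ℝ) * t) ≤ (q : ℝ) * nrm1 t := by
  calc nrm1 ((q : ℝ) * t) ≤ |(q : ℝ) * t - ((q * round t : ℤ) : ℝ)| := nrm1_le_int _ _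
    _ = (q : ℝ) * |t - round t| := by
        push_cast
        rw [← mul_sub, abs_mul, abs_of_nonneg (by positivity : (0:ℝ) ≤ (q:ℝ))]
    _ = (q : ℝ) * nrm1 t := rfl

/- ### The function `δ_n = min_{1 ≤ m ≤ n+1} ‖mβ‖` -/

lemma Icc_one_nonempty (n : ℕ) : (1 : ℕ) ∈ Finset.Icc 1 (n + 1) := by
  simp [Nat.succ_le_succ, Nat.zero_le]

noncomputable def delta (β : ℝ) (n : ℕ) : ℝ :=
  (Finset.Icc 1 (n + 1)).inf' ⟨1, Icc_one_nonempty n⟩ (fun m : ℕ => nrm1 ((m : ℝ) * β))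

lemma delta_le {β : ℝ} {n m : ℕ} (hm : m ∈ Finset.Icc 1 (n + 1)) :
    delta β n ≤ nrm1 ((m : ℝ) * β) := Finset.inf'_le _ hm

lemma delta_nonneg (β : ℝ) (n : ℕ) : 0 ≤ delta β n :=
  Finset.le_inf' _ _ (fun m _ => nrm1_nonneg _)

lemma delta_antitone (β : ℝ) : Antitone (delta β) := by
  intro m n hmn
  apply Finset.le_inf'
  intro k hk
  apply delta_le
  rcases Finset.mem_Icc.mp hk with ⟨h1, h2⟩
  exact Finset.mem_Icc.mpr ⟨h1, h2.trans (by omega)⟩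

lemma delta_pos {β : ℝ} (hβ : Irrational β) (n : ℕ) : 0 < delta β n := by
  rw [delta]; refine (Finset.lt_inf'_iff _).2 ?_
  intro m hm
  rcases Finset.mem_Icc.mp hm with ⟨h1, _⟩
  have : Irrational ((m : ℝ) * β) := by
    have := hβ.ratCast_mul (q := (m : ℚ)) (by exact_mod_cast Nat.one_le_iff_ne_zero.mp h1)
    simpa using this
  exact nrm1_pos_of_irrational this

/- ### Main lemma: for irrational `β`, `Σ δ_n = ∞`. -/

set_option maxHeartbeats 1000000 in
lemma delta_not_summable {β : ℝ} (hβ : Irrational β) : ¬ Summable (delta β) := by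
  classical
  intro hs
  have hpos : ∀ n, 0 < delta β n := delta_pos hβ
  have h0 : Tendsto (delta β) atTop (nhds 0) := hs.tendsto_atTop_zero
  have htail : Tendsto (fun i => ∑' k, delta β (k + i)) atTop (nhds 0) :=
    tendsto_sum_nat_add _
  -- choose N with all tails beyond N smaller than 1/2
  obtain ⟨N, hN⟩ := (htail.eventually (gt_mem_nhds (by norm_num : (0:ℝ) < 1/2))).exists_forall_of_atTop
  -- frequently δ_n ≤ 1/(4(n+1))
  have hfreq : ∃ n, N ≤ n ∧ delta β n ≤ 1 / (4 * ((n : ℝ) + 1)) := by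
    by_contra hcon
    push_neg at hcon
    have hcmp : Summable (fun k : ℕ => 1 / (4 * (((k + N : ℕ) : ℝ) + 1))) := by
      have hs' : Summable (fun k => delta β (k + N)) := (summable_nat_add_iff N).2 hs
      refine hs'.of_nonneg_of_le (fun k => by positivity) (fun k => ?_)
      exact (hcon (k + N) (Nat.le_add_left N k)).le
    have h1 : Summable (fun n : ℕ => 1 / (4 * ((n : ℝ) + 1))) :=
      (summable_nat_add_iff N).1 hcmp
    have h2 : Summable (fun n : ℕ => 1 / ((n : ℝ) + 1)) := by
      have := h1.mul_left 4
      refine this.congr (fun n => ?_)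
      field_simp
    have h3 : Summable (fun n : ℕ => 1 / (n : ℝ)) := by
      refine (summable_nat_add_iff 1).1 ?_
      refine h2.congr (fun n => ?_)
      push_cast
      ring_nf
    exact Real.not_summable_one_div_natCast h3
  obtain ⟨n, hNn, hn⟩ := hfreq
  set v : ℝ := delta β n with hvdef
  have hv : 0 < v := hpos n
  obtain ⟨a, haI, hav⟩ := Finset.exists_mem_eq_inf' (⟨1, Icc_one_nonempty n⟩ :
      (Finset.Icc 1 (n + 1)).Nonempty) (fun m : ℕ => nrm1 ((m : ℝ) * β))
  rcases Finset.mem_Icc.mp haI with ⟨ha1, ha2⟩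
  -- existence of a smaller value
  have hex : ∃ m : ℕ, 1 ≤ m ∧ nrm1 ((m : ℝ) * β) < v := by
    obtain ⟨M, hM⟩ := (h0.eventually (gt_mem_nhds hv)).exists
    rw [hvdef] at hM
    have : delta β M < v := hM
    rw [delta] at this
    obtain ⟨m, hmI, hm⟩ := (Finset.inf'_lt_iff _).1 this
    exact ⟨m, (Finset.mem_Icc.mp hmI).1, hm⟩
  set b : ℕ := Nat.find hex with hbdef
  obtain ⟨hb1, hbv⟩ : 1 ≤ b ∧ nrm1 ((b : ℝ) * β) < v := Nat.find_spec hex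
  set w : ℝ := nrm1 ((b : ℝ) * β) with hwdef
  have hbmin : ∀ m : ℕ, m < b → 1 ≤ m → v ≤ nrm1 ((m : ℝ) * β) := by
    intro m hm h1
    by_contra hlt
    push_neg at hlt
    exact Nat.find_min hex hm ⟨h1, hlt⟩
  have hbn : n + 1 < b := by
    by_contra hle
    push_neg at hle
    have : v ≤ nrm1 ((b : ℝ) * β) := delta_le (Finset.mem_Icc.mpr ⟨hb1, hle⟩)
    exact absurd hbv (not_lt.mpr this)
  have hw0 : 0 < w := by
    apply nrm1_pos_of_irrational
    have := hβ.ratCast_mul (q := (b : ℚ)) (by exact_mod_cast Nat.one_le_iff_ne_zero.mp hb1)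
    simpa using this
  -- signed errors
  set ea : ℝ := (a : ℝ) * β - round ((a : ℝ) * β) with headef
  set eb : ℝ := (b : ℝ) * β - round ((b : ℝ) * β) with hebdef
  have hea : |ea| = v := hav.symm
  have heb : |eb| = w := rfl
  have hea0 : ea ≠ 0 := by
    intro h; rw [h, abs_zero] at hea; exact hv.ne hea
  have heb0 : eb ≠ 0 := by
    intro h; rw [h, abs_zero] at heb; exact hw0.ne heb
  have hab : a < b := lt_of_le_of_lt (by omega) hbn
  -- opposite signs
  have hopp : ea * eb < 0 := by
    rcases lt_trichotomy (ea * eb) 0 with h | h | h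
    · exact h
    · exact absurd (mul_eq_zero.mp h) (by push_neg; exact ⟨hea0, heb0⟩)
    · -- same sign: contradiction via b - a
      exfalso
      have hdiff : |eb - ea| < v := by
        rcases lt_trichotomy ea 0 with h1 | h1 | h1
        · have h2 : eb < 0 := by nlinarith
          have : |ea| = -ea := abs_of_neg h1
          have : |eb| = -eb := abs_of_neg h2
          rw [abs_lt]
          constructor <;> nlinarith [abs_of_neg h1, abs_of_neg h2, hea, heb, hbv]
        · exact absurd h1 hea0
        · have h2 : 0 < eb := by nlinarith
          rw [abs_lt]
          constructor <;> nlinarith [abs_of_pos h1, abs_of_pos h2, hea, heb, hbv]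
      have hcast : ((b - a : ℕ) : ℝ) = (b : ℝ) - (a : ℝ) := by
        push_cast [Nat.cast_sub hab.le]; ring
      have hle : nrm1 (((b - a : ℕ) : ℝ) * β) ≤ |eb - ea| := by
        have := nrm1_le_int (((b - a : ℕ) : ℝ) * β) (round ((b : ℝ) * β) - round ((a : ℝ) * β))
        refine this.trans_eq ?_
        rw [hcast]
        congr 1
        push_cast
        ring
      have h1 : (1 : ℕ) ≤ b - a := by omega
      have h2 : b - a < b := by omega
      have := hbmin (b - a) h2 h1
      linarith [hle.trans_lt hdiff]
  -- the key inequality  1 ≤ b v + a w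
  have hkey : (1 : ℝ) ≤ (b : ℝ) * v + (a : ℝ) * w := by
    set z : ℤ := a * round ((b : ℝ) * β) - b * round ((a : ℝ) * β) with hzdef
    have hz : (z : ℝ) = (b : ℝ) * ea - (a : ℝ) * eb := by
      rw [hzdef]; push_cast [headef, hebdef]; ring
    have habs : |(z : ℝ)| = (b : ℝ) * v + (a : ℝ) * w := by
      rw [hz]
      have hb0 : (0 : ℝ) < (b : ℝ) := by exact_mod_cast hb1
      have ha0 : (0 : ℝ) < (a : ℝ) := by exact_mod_cast ha1
      rcases lt_trichotomy ea 0 with h1 | h1 | h1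
      · have h2 : 0 < eb := by nlinarith
        rw [abs_of_nonpos (by nlinarith), ← hea, ← heb,
          abs_of_neg h1, abs_of_pos h2]
        ring
      · exact absurd h1 hea0
      · have h2 : eb < 0 := by nlinarith
        rw [abs_of_nonneg (by nlinarith), ← hea, ← heb,
          abs_of_pos h1, abs_of_neg h2]
        ring
    have hz0 : z ≠ 0 := by
      intro h
      rw [h] at habs
      simp at habs
      have hb0 : (0 : ℝ) < (b : ℝ) := by exact_mod_cast hb1
      have ha0 : (0 : ℝ) < (a : ℝ) := by exact_mod_cast ha1
      nlinarith
    have h1le : (1 : ℝ) ≤ |(z : ℝ)| := by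
      rw [← Int.cast_abs]
      exact_mod_cast Int.one_le_abs hz0
    rw [habs] at h1le
    linarith
  -- numeric conclusion: tail from n has sum ≥ 1/2
  have hn1 : (0 : ℝ) < (n : ℝ) + 1 := by positivity
  have hnv : ((n : ℝ) + 1) * v ≤ 1 / 4 := by
    have h4 : (0 : ℝ) < 4 * ((n : ℝ) + 1) := by positivity
    rw [le_div_iff₀ h4] at hn
    nlinarith
  have haw : (a : ℝ) * w ≤ ((n : ℝ) + 1) * v := by
    have ha' : (a : ℝ) ≤ (n : ℝ) + 1 := by exact_mod_cast ha2
    have : 0 ≤ (a : ℝ) := by positivity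
    nlinarith [hbv]
  have hbv34 : (3 : ℝ) / 4 ≤ (b : ℝ) * v := by linarith
  -- each δ_m for n ≤ m ≤ b - 2 is ≥ v
  have hdel : ∀ i, i < b - 1 - n → v ≤ delta β (i + n) := by
    intro i hi
    apply Finset.le_inf'
    intro k hk
    rcases Finset.mem_Icc.mp hk with ⟨hk1, hk2⟩
    exact hbmin k (by omega) hk1
  -- sum over the block
  have hsum : ((b - 1 - n : ℕ) : ℝ) * v ≤ ∑ i ∈ Finset.range (b - 1 - n), delta β (i + n) := by
    calc ((b - 1 - n : ℕ) : ℝ) * v = ∑ _i ∈ Finset.range (b - 1 - n), v := by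
          rw [Finset.sum_const, nsmul_eq_mul, Finset.card_range]
      _ ≤ _ := Finset.sum_le_sum (fun i hi => hdel i (Finset.mem_range.mp hi))
  have hs' : Summable (fun k => delta β (k + n)) := (summable_nat_add_iff n).2 hs
  have hsum2 : ∑ i ∈ Finset.range (b - 1 - n), delta β (i + n) ≤ ∑' k, delta β (k + n) :=
    Summable.sum_le_tsum _ (fun k _ => delta_nonneg β _) hs'
  have hcount : ((b - 1 - n : ℕ) : ℝ) = (b : ℝ) - 1 - (n : ℝ) := by
    have hnb : n ≤ b - 1 := by omega
    rw [Nat.cast_sub hnb, Nat.cast_sub hb1, Nat.cast_one]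
  have hhalf : (1 : ℝ) / 2 ≤ ∑' k, delta β (k + n) := by
    have hv' : ((b : ℝ) - 1 - (n : ℝ)) * v = (b : ℝ) * v - ((n : ℝ) + 1) * v := by ring
    have : (1 : ℝ) / 2 ≤ ((b : ℝ) - 1 - (n : ℝ)) * v := by
      rw [hv']; linarith
    calc (1 : ℝ) / 2 ≤ ((b : ℝ) - 1 - (n : ℝ)) * v := this
      _ = ((b - 1 - n : ℕ) : ℝ) * v := by rw [hcount]
      _ ≤ ∑ i ∈ Finset.range (b - 1 - n), delta β (i + n) := hsum
      _ ≤ ∑' k, delta β (k + n) := hsum2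
  have := hN n hNn
  linarith

/- ### The two directions -/

lemma rat_imp_rat_left {x y : ℝ} (h : (x, y) ∈ Pi1) (r : ℚ) (hx : x = (r : ℝ)) :
    ∃ q : ℚ, y = (q : ℝ) := by
  classical
  by_contra hy
  have hyirr : Irrational y := by
    rintro ⟨q, hq⟩
    exact hy ⟨q, hq.symm⟩
  set q : ℕ := r.den with hqdef
  have hq0 : 0 < q := r.pos
  have hqx : (q : ℝ) * x = ((r.num : ℤ) : ℝ) := by
    rw [hx]
    have hnum : ((r.den : ℚ)) * r = ((r.num : ℚ)) := by
      rw [mul_comm, Rat.mul_den_eq_num]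
    calc (q : ℝ) * (r : ℝ) = (((r.den : ℚ) * r : ℚ) : ℝ) := by push_cast; ring
      _ = ((r.num : ℤ) : ℝ) := by rw [hnum]; push_cast; ring
  set c : ℝ := (Finset.range q).inf' ⟨0, Finset.mem_range.mpr hq0⟩
      (fun j : ℕ => nrm1 ((j : ℝ) * x + y)) with hcdef
  have hc0 : 0 < c := by
    rw [hcdef]; refine (Finset.lt_inf'_iff _).2 ?_
    intro j _
    apply nrm1_pos_of_irrational
    rw [hx]
    have hcast : (j : ℝ) * ((r : ℚ) : ℝ) + y = (((j : ℚ) * r : ℚ) : ℝ) + y := by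
      push_cast; ring
    rw [hcast]
    exact hyirr.ratCast_add _
  have hψ : (fun _ : ℕ => c) ∈ calD1 := by
    refine ⟨fun _ => hc0.le, antitone_const, ?_⟩
    intro hsum
    haveI : Finite ℕ := Finite.of_summable_const hc0 hsum
    exact not_finite ℕ
  obtain ⟨n, hn⟩ := (h _ hψ).exists
  -- periodicity: nrm1 (n x + y) = nrm1 ((n % q) x + y) ≥ c
  have hper : nrm1 ((n : ℝ) * x + y) = nrm1 (((n % q : ℕ) : ℝ) * x + y) := by
    set k : ℕ := n / q with hk
    set j : ℕ := n % q with hj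
    have hdm : n = j + k * q := (Nat.mod_add_div' n q).symm
    have hn' : (n : ℝ) = (j : ℝ) + (k : ℝ) * (q : ℝ) := by
      rw [hdm]
      push_cast
      ring
    have heq : (n : ℝ) * x + y = (j : ℝ) * x + y + (((k : ℤ) * r.num : ℤ) : ℝ) := by
      rw [hn']
      push_cast
      rw [← hqx]
      ring
    rw [heq, nrm1_add_int]
  have hge : c ≤ nrm1 ((n : ℝ) * x + y) := by
    rw [hper]
    exact Finset.inf'_le _ (Finset.mem_range.mpr (Nat.mod_lt n hq0))
  linarith

lemma rat_imp_rat_right {x y : ℝ} (h : (x, y) ∈ Pi1) (r : ℚ) (hy : y = (r : ℝ)) :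
    ∃ q : ℚ, x = (q : ℝ) := by
  classical
  by_contra hx
  have hxirr : Irrational x := by
    rintro ⟨q, hq⟩
    exact hx ⟨q, hq.symm⟩
  set q : ℕ := r.den with hqdef
  have hq0 : 0 < q := r.pos
  have hqy : (q : ℝ) * y = ((r.num : ℤ) : ℝ) := by
    rw [hy]
    have hnum : ((r.den : ℚ)) * r = ((r.num : ℚ)) := by
      rw [mul_comm, Rat.mul_den_eq_num]
    calc (q : ℝ) * (r : ℝ) = (((r.den : ℚ) * r : ℚ) : ℝ) := by push_cast; ring
      _ = ((r.num : ℤ) : ℝ) := by rw [hnum]; push_cast; ring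
  set β : ℝ := (q : ℝ) * x with hβdef
  have hβirr : Irrational β := by
    have := hxirr.ratCast_mul (q := (q : ℚ)) (by exact_mod_cast hq0.ne')
    simpa [hβdef] using this
  set ψ : ℕ → ℝ := fun n => (Finset.Icc 1 (n + 1)).inf' ⟨1, Icc_one_nonempty n⟩
      (fun m : ℕ => nrm1 ((m : ℝ) * x + y)) with hψdef
  have hψ_nonneg : ∀ n, 0 ≤ ψ n := fun n => Finset.le_inf' _ _ (fun m _ => nrm1_nonneg _)
  have hψ_anti : Antitone ψ := by
    intro m n hmn
    apply Finset.le_inf'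
    intro k hk
    rcases Finset.mem_Icc.mp hk with ⟨h1, h2⟩
    exact Finset.inf'_le _ (Finset.mem_Icc.mpr ⟨h1, h2.trans (by omega)⟩)
  have hψ_le_delta : ∀ n, delta β n ≤ (q : ℝ) * ψ n := by
    intro n
    obtain ⟨m, hmI, hm⟩ := Finset.exists_mem_eq_inf' (⟨1, Icc_one_nonempty n⟩ :
        (Finset.Icc 1 (n + 1)).Nonempty) (fun m : ℕ => nrm1 ((m : ℝ) * x + y))
    rw [hψdef]
    simp only []
    rw [hm]
    have h1 : nrm1 ((m : ℝ) * β) ≤ (q : ℝ) * nrm1 ((m : ℝ) * x + y) := by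
      have h2 : nrm1 ((q : ℝ) * ((m : ℝ) * x + y)) ≤ (q : ℝ) * nrm1 ((m : ℝ) * x + y) :=
        nrm1_nat_mul_le q _
      have h3 : nrm1 ((q : ℝ) * ((m : ℝ) * x + y)) = nrm1 ((m : ℝ) * β) := by
        have : (q : ℝ) * ((m : ℝ) * x + y) = (m : ℝ) * β + ((r.num : ℤ) : ℝ) := by
          rw [hβdef, ← hqy]; ring
        rw [this, nrm1_add_int]
      linarith [h3 ▸ h2]
    exact (delta_le hmI).trans h1
  have hψ_not_summable : ¬ Summable ψ := by
    intro hsum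
    have h1 : Summable (fun n => (q : ℝ) * ψ n) := hsum.mul_left _
    have h2 : Summable (delta β) :=
      h1.of_nonneg_of_le (fun n => delta_nonneg β n) hψ_le_delta
    exact delta_not_summable hβirr h2
  have hmem : ψ ∈ calD1 := ⟨hψ_nonneg, hψ_anti, hψ_not_summable⟩
  obtain ⟨n, hn1, hn⟩ := ((h _ hmem).and_eventually (eventually_ge_atTop 1)).exists
  have : ψ n ≤ nrm1 ((n : ℝ) * x + y) :=
    Finset.inf'_le _ (Finset.mem_Icc.mpr ⟨hn, by omega⟩)
  linarith [hn1]

theorem stmt19 (x y : ℝ) (h : (x, y) ∈ Pi1) :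
    (∃ q : ℚ, x = (q : ℝ)) ↔ (∃ q : ℚ, y = (q : ℝ)) := by
  constructor
  · rintro ⟨r, hr⟩
    exact rat_imp_rat_left h r hr
  · rintro ⟨r, hr⟩
    exact rat_imp_rat_right h r hr
end
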